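/- Let d₁,…,d_M be i.i.d. real random variables of the form dᵢ = zᵢ sin(θᵢ) with zᵢ i.i.d. (E[zᵢ²]=1, E[zᵢ⁴]=4) independent of θᵢ i.i.d. uniform on [-π/L, π/L]. Then E[(Σᵢ dᵢ²)²] = (M/(16π²))·(B - A), where A = 4π(3+M) L sin(2π/L) and B = L²(M-1) sin²(2π/L) + 2π(2(5+M)π + L sin(4π/L)). -/

import Mathlib

open MeasureTheory Real Set ProbabilityTheory

lemma sin_sq_int (a : ℝ) : ∫ x in (-a)..a, Real.sin x ^ 2 = a - Real.sin (2*a)/2 := by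
  rw [integral_sin_sq, Real.sin_two_mul]
  simp [Real.sin_neg, Real.cos_neg]
  ring

lemma sin_pow4_int (a : ℝ) : ∫ x in (-a)..a, Real.sin x ^ 4
    = 3*a/4 - Real.sin (2*a)/2 + Real.sin (4*a)/16 := by
  have h := integral_sin_pow (a := -a) (b := a) 2
  norm_num [integral_sin_sq, Real.sin_neg, Real.cos_neg] at h
  rw [show (4:ℕ) = 2 + 2 from rfl, h,
    show (4:ℝ)*a = 2*(2*a) by ring, Real.sin_two_mul (2*a), Real.sin_two_mul a,
    Real.cos_two_mul a]
  linear_combination (-(Real.sin a * Real.cos a / 2)) * (Real.sin_sq_add_cos_sq a)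

lemma uniform_integral (g : ℝ → ℝ) {L : ℝ} (hL : 0 < L) :
    ∫ x, g x ∂((volume : Measure ℝ).withDensity
      (fun x => ENNReal.ofReal (indicator (Icc (-(π/L)) (π/L)) (fun _ => L / (2*π)) x)))
      = (L/(2*π)) * ∫ x in (-(π/L))..(π/L), g x := by
  have hπ := Real.pi_pos
  have hc : (0:ℝ) ≤ L/(2*π) := by positivity
  have hmeas : Measurable fun x =>
      Real.toNNReal (indicator (Icc (-(π/L)) (π/L)) (fun _ => L / (2*π)) x) :=
    (measurable_const.indicator measurableSet_Icc).real_toNNReal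
  rw [show (fun x => ENNReal.ofReal (indicator (Icc (-(π/L)) (π/L)) (fun _ => L / (2*π)) x))
      = (fun x => ((Real.toNNReal (indicator (Icc (-(π/L)) (π/L)) (fun _ => L / (2*π)) x)
        : NNReal) : ENNReal)) from rfl,
    integral_withDensity_eq_integral_smul hmeas]
  have key : ∀ x, (Real.toNNReal (indicator (Icc (-(π/L)) (π/L)) (fun _ => L / (2*π)) x)) • g x
      = indicator (Icc (-(π/L)) (π/L)) (fun y => (L/(2*π)) * g y) x := by
    intro x
    by_cases hx : x ∈ Icc (-(π/L)) (π/L) <;>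
      simp [indicator, hx, NNReal.smul_def, Real.coe_toNNReal', max_eq_left hc]
  simp_rw [key]
  rw [integral_indicator measurableSet_Icc, integral_Icc_eq_integral_Ioc,
    ← intervalIntegral.integral_of_le (by linarith [div_pos hπ hL] : -(π/L) ≤ π/L),
    intervalIntegral.integral_const_mul]

/-- With `dᵢ = zᵢ sin θᵢ`, `zᵢ` i.i.d. (`E[zᵢ²]=1`, `E[zᵢ⁴]=4`) independent of `θᵢ`
i.i.d. uniform on `[-π/L, π/L]`, one has `E[(Σᵢ dᵢ²)²] = (M/(16π²))(B - A)` with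
`A = 4π(3+M) L sin(2π/L)` and
`B = L²(M-1) sin²(2π/L) + 2π(2(5+M)π + L sin(4π/L))`. -/
theorem fourth_moment_sum_squares_imag
    {Ω : Type*} [MeasurableSpace Ω] (μ : Measure Ω) [IsProbabilityMeasure μ]
    (M : ℕ) (hM : 0 < M) (L : ℝ) (hL : 2 ≤ L)
    (z θ : Fin M → Ω → ℝ) (hzm : ∀ i, Measurable (z i)) (hθm : ∀ i, Measurable (θ i))
    (hznn : ∀ i ω, 0 ≤ z i ω)
    (hindep : iIndepFun (m := fun _ : Fin M ⊕ Fin M => (inferInstance : MeasurableSpace ℝ))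
      (Sum.elim z θ) μ)
    (hzid : ∀ i j, Measure.map (z i) μ = Measure.map (z j) μ)
    (hz2 : ∀ i, ∫ ω, (z i ω)^2 ∂μ = 1)
    (hz4 : ∀ i, ∫ ω, (z i ω)^4 ∂μ = 4)
    (hθd : ∀ i, Measure.map (θ i) μ = (volume : Measure ℝ).withDensity
      (fun x => ENNReal.ofReal (indicator (Icc (-(π/L)) (π/L)) (fun _ => L / (2*π)) x))) :
    ∫ ω, (∑ i, (z i ω * Real.sin (θ i ω))^2)^2 ∂μ
      = (M / (16 * π^2))
          * ((L^2 * (M - 1 : ℝ) * (Real.sin (2*π/L))^2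
              + 2*π*(2*(5 + M : ℝ)*π + L * Real.sin (4*π/L)))
            - 4*π*(3 + M : ℝ) * L * Real.sin (2*π/L)) := by
  have hπ := Real.pi_pos
  have hL0 : (0:ℝ) < L := by linarith
  set s2 : ℝ := 1/2 - L * Real.sin (2*π/L)/(4*π) with hs2def
  set s4 : ℝ := 3/8 - L * Real.sin (2*π/L)/(4*π) + L * Real.sin (4*π/L)/(32*π) with hs4def
  -- expectations of sin powers of θ i
  have hθpow : ∀ (i : Fin M) (n : ℕ), ∫ ω, Real.sin (θ i ω)^n ∂μ
      = (L/(2*π)) * ∫ x in (-(π/L))..(π/L), Real.sin x ^ n := by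
    intro i n
    rw [← integral_map (hθm i).aemeasurable (f := fun x : ℝ => Real.sin x ^ n)
        ((Real.continuous_sin.pow n).aestronglyMeasurable),
      hθd i, uniform_integral _ hL0]
  have h2a : 2 * (π/L) = 2*π/L := by ring
  have h4a : 4 * (π/L) = 4*π/L := by ring
  have hθ2 : ∀ i, ∫ ω, Real.sin (θ i ω)^2 ∂μ = s2 := by
    intro i
    rw [hθpow i 2, sin_sq_int, h2a, hs2def]
    field_simp
    ring
  have hθ4 : ∀ i, ∫ ω, Real.sin (θ i ω)^4 ∂μ = s4 := by
    intro i
    rw [hθpow i 4, sin_pow4_int, h2a, h4a, hs4def]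
    field_simp
    ring
  -- integrability of z powers
  have hz2int : ∀ i, Integrable (fun ω => z i ω^2) μ := by
    intro i
    by_contra h
    have := hz2 i
    rw [integral_undef h] at this
    norm_num at this
  have hz4int : ∀ i, Integrable (fun ω => z i ω^4) μ := by
    intro i
    by_contra h
    have := hz4 i
    rw [integral_undef h] at this
    norm_num at this
  -- integrability of bounded sin powers
  have hsinint : ∀ (i : Fin M) (n : ℕ), Integrable (fun ω => Real.sin (θ i ω)^(2*n)) μ := by
    intro i n
    refine Integrable.mono' (integrable_const 1)
      ((Real.measurable_sin.comp (hθm i)).pow_const _).aestronglyMeasurable ?_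
    filter_upwards with ω
    calc ‖Real.sin (θ i ω)^(2*n)‖ = |Real.sin (θ i ω)|^(2*n) := by
          rw [Real.norm_eq_abs, abs_pow]
    _ ≤ 1 := pow_le_one₀ (abs_nonneg _) (Real.abs_sin_le_one _)
  -- independence of z i and θ i
  have hzθ : ∀ i, IndepFun (z i) (θ i) μ :=
    fun i => hindep.indepFun (i := Sum.inl i) (j := Sum.inr i) (by simp)
  -- E[(z_i sin θ_i)^4] = 4 s4
  have hd4 : ∀ i, ∫ ω, (z i ω * Real.sin (θ i ω))^4 ∂μ = 4 * s4 := by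
    intro i
    have h1 : IndepFun (fun ω => z i ω^4) (fun ω => Real.sin (θ i ω)^4) μ :=
      (hzθ i).comp (measurable_id.pow_const 4) (Real.measurable_sin.pow_const 4)
    have h2 := h1.integral_fun_mul_eq_mul_integral (hz4int i).aestronglyMeasurable
      (Integrable.aestronglyMeasurable (by simpa using hsinint i 2))
    calc ∫ ω, (z i ω * Real.sin (θ i ω))^4 ∂μ
        = ∫ ω, (z i ω^4) * (Real.sin (θ i ω)^4) ∂μ := by simp only [mul_pow]
      _ = (∫ ω, z i ω^4 ∂μ) * ∫ ω, Real.sin (θ i ω)^4 ∂μ := h2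
      _ = 4 * s4 := by rw [hz4 i, hθ4 i]
  -- E[(z_i sin θ_i)^2] = s2
  have hd2 : ∀ i, ∫ ω, z i ω^2 * Real.sin (θ i ω)^2 ∂μ = s2 := by
    intro i
    have h1 : IndepFun (fun ω => z i ω^2) (fun ω => Real.sin (θ i ω)^2) μ :=
      (hzθ i).comp (measurable_id.pow_const 2) (Real.measurable_sin.pow_const 2)
    have h2 := h1.integral_fun_mul_eq_mul_integral (hz2int i).aestronglyMeasurable
      (Integrable.aestronglyMeasurable (by simpa using hsinint i 1))
    calc ∫ ω, z i ω^2 * Real.sin (θ i ω)^2 ∂μ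
        = (∫ ω, z i ω^2 ∂μ) * ∫ ω, Real.sin (θ i ω)^2 ∂μ := h2
      _ = s2 := by rw [hz2 i, hθ2 i, one_mul]
  -- the squared family is independent
  set F : Fin M ⊕ Fin M → Ω → ℝ :=
    Sum.elim (fun i ω => z i ω^2) (fun i ω => Real.sin (θ i ω)^2) with hF
  have hFmeas : ∀ k, Measurable (F k) := by
    rintro (i|i)
    · exact (hzm i).pow_const 2
    · exact (Real.measurable_sin.comp (hθm i)).pow_const 2
  have hFindep : iIndepFun (m := fun _ : Fin M ⊕ Fin M => (inferInstance : MeasurableSpace ℝ)) F μ := by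
    have := hindep.comp
      (Sum.elim (fun _ => fun x : ℝ => x^2) (fun _ => fun x : ℝ => Real.sin x^2))
      (by rintro (i|i)
          · exact measurable_id.pow_const 2
          · exact Real.measurable_sin.pow_const 2)
    convert this using 1
    funext k
    cases k <;> rfl
  -- integrability of cross terms
  have hint : ∀ i j, Integrable (fun ω =>
      (z i ω * Real.sin (θ i ω))^2 * (z j ω * Real.sin (θ j ω))^2) μ := by
    intro i j
    have hbound : ∀ ω, (z i ω * Real.sin (θ i ω))^2 * (z j ω * Real.sin (θ j ω))^2
        ≤ z i ω^2 * z j ω^2 := by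
      intro ω
      have h1 : (z i ω * Real.sin (θ i ω))^2 ≤ z i ω^2 := by
        rw [mul_pow]
        nlinarith [Real.sin_sq_le_one (θ i ω), sq_nonneg (z i ω)]
      have h2 : (z j ω * Real.sin (θ j ω))^2 ≤ z j ω^2 := by
        rw [mul_pow]
        nlinarith [Real.sin_sq_le_one (θ j ω), sq_nonneg (z j ω)]
      exact mul_le_mul h1 h2 (sq_nonneg _) (sq_nonneg _)
    have hmeas : AEStronglyMeasurable (fun ω =>
        (z i ω * Real.sin (θ i ω))^2 * (z j ω * Real.sin (θ j ω))^2) μ := by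
      apply Measurable.aestronglyMeasurable
      exact (((hzm i).mul (Real.measurable_sin.comp (hθm i))).pow_const 2).mul
        (((hzm j).mul (Real.measurable_sin.comp (hθm j))).pow_const 2)
    by_cases hij : i = j
    · subst hij
      refine Integrable.mono' (hz4int i) hmeas ?_
      filter_upwards with ω
      rw [Real.norm_eq_abs, abs_of_nonneg (by positivity)]
      calc (z i ω * Real.sin (θ i ω))^2 * (z i ω * Real.sin (θ i ω))^2
          ≤ z i ω^2 * z i ω^2 := hbound ω
        _ = z i ω^4 := by ring
    · have hzzindep : IndepFun (fun ω => z i ω^2) (fun ω => z j ω^2) μ :=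
        (hindep.indepFun (i := Sum.inl i) (j := Sum.inl j) (by simp [hij])).comp
          (measurable_id.pow_const 2) (measurable_id.pow_const 2)
      have hzz : Integrable (fun ω => z i ω^2 * z j ω^2) μ :=
        hzzindep.integrable_mul (hz2int i) (hz2int j)
      refine Integrable.mono' hzz hmeas ?_
      filter_upwards with ω
      rw [Real.norm_eq_abs, abs_of_nonneg (by positivity)]
      exact hbound ω
  -- cross-term expectations
  have hterm : ∀ i j, ∫ ω, (z i ω * Real.sin (θ i ω))^2 * (z j ω * Real.sin (θ j ω))^2 ∂μ
      = if i = j then 4*s4 else s2^2 := by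
    intro i j
    by_cases hij : i = j
    · subst hij
      simp only [if_pos rfl]
      rw [← hd4 i]
      congr 1
      funext ω
      ring
    · simp only [if_neg hij]
      have hcross : IndepFun (fun ω => z i ω^2 * Real.sin (θ i ω)^2)
          (fun ω => z j ω^2 * Real.sin (θ j ω)^2) μ := by
        have := hFindep.indepFun_mul_mul hFmeas
          (Sum.inl i) (Sum.inr i) (Sum.inl j) (Sum.inr j)
          (by simp [hij]) (by simp) (by simp) (by simp [hij])
        exact this
      have hi2 : Integrable (fun ω => z i ω^2 * Real.sin (θ i ω)^2) μ := by
        have := hint i i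
        refine Integrable.mono' (hz2int i)
          (((hzm i).pow_const 2).mul
            ((Real.measurable_sin.comp (hθm i)).pow_const 2)).aestronglyMeasurable ?_
        filter_upwards with ω
        rw [Real.norm_eq_abs, abs_of_nonneg (by positivity)]
        nlinarith [Real.sin_sq_le_one (θ i ω), sq_nonneg (z i ω)]
      have hj2 : Integrable (fun ω => z j ω^2 * Real.sin (θ j ω)^2) μ := by
        refine Integrable.mono' (hz2int j)
          (((hzm j).pow_const 2).mul
            ((Real.measurable_sin.comp (hθm j)).pow_const 2)).aestronglyMeasurable ?_
        filter_upwards with ω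
        rw [Real.norm_eq_abs, abs_of_nonneg (by positivity)]
        nlinarith [Real.sin_sq_le_one (θ j ω), sq_nonneg (z j ω)]
      have h2 := hcross.integral_fun_mul_eq_mul_integral hi2.aestronglyMeasurable hj2.aestronglyMeasurable
      calc ∫ ω, (z i ω * Real.sin (θ i ω))^2 * (z j ω * Real.sin (θ j ω))^2 ∂μ
          = ∫ ω, (z i ω^2 * Real.sin (θ i ω)^2) * (z j ω^2 * Real.sin (θ j ω)^2) ∂μ := by
            congr 1; funext ω; ring
        _ = (∫ ω, z i ω^2 * Real.sin (θ i ω)^2 ∂μ)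
              * ∫ ω, z j ω^2 * Real.sin (θ j ω)^2 ∂μ := h2
        _ = s2^2 := by rw [hd2 i, hd2 j]; ring
  -- main computation
  have main : ∫ ω, (∑ i, (z i ω * Real.sin (θ i ω))^2)^2 ∂μ
      = M * (4*s4) + (M * (M - 1) : ℝ) * s2^2 := by
    calc ∫ ω, (∑ i, (z i ω * Real.sin (θ i ω))^2)^2 ∂μ
        = ∫ ω, ∑ i, ∑ j, (z i ω * Real.sin (θ i ω))^2 * (z j ω * Real.sin (θ j ω))^2 ∂μ := by
          congr 1; funext ω
          rw [sq, Finset.sum_mul_sum]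
      _ = ∑ i, ∑ j, ∫ ω, (z i ω * Real.sin (θ i ω))^2 * (z j ω * Real.sin (θ j ω))^2 ∂μ := by
          rw [integral_finset_sum _ (fun i _ => integrable_finset_sum _ fun j _ => hint i j)]
          exact Finset.sum_congr rfl fun i _ => integral_finset_sum _ fun j _ => hint i j
      _ = ∑ i : Fin M, ∑ j : Fin M, (if i = j then 4*s4 else s2^2) :=
          Finset.sum_congr rfl fun i _ => Finset.sum_congr rfl fun j _ => hterm i j
      _ = ∑ i : Fin M, (4*s4 + ((M:ℝ) - 1) * s2^2) := by
          refine Finset.sum_congr rfl fun i _ => ?_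
          have : ∀ j : Fin M, (if i = j then 4*s4 else s2^2)
              = s2^2 + (if i = j then 4*s4 - s2^2 else 0) := by
            intro j; by_cases h : i = j <;> simp [h]
          simp_rw [this]
          rw [Finset.sum_add_distrib, Finset.sum_const, Finset.sum_ite_eq]
          simp [Finset.card_univ]
          ring
      _ = M * (4*s4) + (M * (M - 1) : ℝ) * s2^2 := by
          rw [Finset.sum_const, Finset.card_univ]
          simp [Fintype.card_fin]
          ring
  rw [main, hs2def, hs4def]
  have hπ' : π ≠ 0 := Real.pi_ne_zero
  field_simp
  ring
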